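/- Let α > 0 and let τ : ℝ → ℝ be twice differentiable with τ(t) > 0 for all t, τ(0) = 1, τ'(0) = 0, and τ''(t) = α / (2 τ(t)^(1+α)) for all t ∈ ℝ. Then the function t ↦ (τ'(t)/τ(t))² is integrable on (0, ∞), i.e. ∫₀^∞ (τ'(t)/τ(t))² dt < ∞. -/

import Mathlib

open MeasureTheory Set

/-- For the solution of the scaling ODE, `t ↦ (τ'(t)/τ(t))²` is integrable on `(0,∞)`. -/
theorem scaling_ode_integrable (α : ℝ) (hα : 0 < α) (τ τ' : ℝ → ℝ)
    (hpos : ∀ t, 0 < τ t) (hτ0 : τ 0 = 1) (hτ'0 : τ' 0 = 0)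
    (hd1 : ∀ t, HasDerivAt τ (τ' t) t)
    (hd2 : ∀ t, HasDerivAt τ' (α / (2 * τ t ^ (1 + α))) t) :
    MeasureTheory.IntegrableOn (fun t => (τ' t / τ t) ^ 2) (Set.Ioi (0 : ℝ)) := by
  have hrp : ∀ t, (0:ℝ) < τ t ^ (1 + α) := fun t => Real.rpow_pos_of_pos (hpos t) _
  -- Energy conservation: τ'² + τ^(-α) = 1
  have hE : ∀ t, τ' t ^ 2 + τ t ^ (-α) = 1 := by
    have hder : ∀ t, HasDerivAt (fun s => τ' s ^ 2 + τ s ^ (-α)) 0 t := by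
      intro t
      have h1 : HasDerivAt (fun s => τ' s ^ 2)
          (2 * τ' t * (α / (2 * τ t ^ (1 + α)))) t := by
        simpa [mul_comm] using ((hd2 t).fun_pow 2)
      have h2 : HasDerivAt (fun s => τ s ^ (-α))
          (τ' t * (-α) * τ t ^ (-α - 1)) t :=
        (hd1 t).rpow_const (Or.inl (hpos t).ne')
      have key : 2 * τ' t * (α / (2 * τ t ^ (1 + α))) + τ' t * (-α) * τ t ^ (-α - 1) = 0 := by
        have : τ t ^ (-α - 1) = (τ t ^ (1 + α))⁻¹ := by
          rw [show (-α - 1 : ℝ) = -(1 + α) by ring, Real.rpow_neg (hpos t).le]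
        rw [this]
        field_simp
        ring
      have := h1.fun_add h2
      rw [key] at this
      exact this
    have hconst := is_const_of_deriv_eq_zero
      (fun t => (hder t).differentiableAt) (fun t => (hder t).deriv)
    intro t
    have := hconst t 0
    simpa [hτ'0, hτ0, Real.one_rpow] using this
  -- τ' is nonneg on [0,∞)
  have hmono : Monotone τ' := by
    refine monotone_of_deriv_nonneg (fun t => (hd2 t).differentiableAt) (fun t => ?_)
    rw [(hd2 t).deriv]
    have := hrp t
    positivity
  have hτ'nonneg : ∀ t, 0 ≤ t → 0 ≤ τ' t := fun t ht => hτ'0 ▸ hmono ht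
  -- τ' ≤ 1
  have hτ'le : ∀ t, τ' t ≤ 1 := by
    intro t
    have h1 : τ' t ^ 2 ≤ 1 := by
      have := hE t
      nlinarith [Real.rpow_pos_of_pos (hpos t) (-α)]
    nlinarith [abs_nonneg (τ' t), sq_abs (τ' t), le_abs_self (τ' t)]
  -- dominating function g' with FTC
  set g : ℝ → ℝ := fun t => -(τ t)⁻¹ with hg
  have hgd : ∀ t, HasDerivAt g (τ' t / τ t ^ 2) t := by
    intro t
    have := ((hd1 t).fun_inv (hpos t).ne').fun_neg
    simpa [hg, neg_div] using this
  have hcont : Continuous fun t => (τ' t / τ t) ^ 2 := by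
    exact ((continuous_iff_continuousAt.2 fun t => (hd2 t).differentiableAt.continuousAt).div
      (continuous_iff_continuousAt.2 fun t => (hd1 t).differentiableAt.continuousAt)
      (fun t => (hpos t).ne')).pow 2
  have hcontg : Continuous fun t => τ' t / τ t ^ 2 := by
    exact (continuous_iff_continuousAt.2 fun t => (hd2 t).differentiableAt.continuousAt).div
      ((continuous_iff_continuousAt.2 fun t => (hd1 t).differentiableAt.continuousAt).pow 2)
      (fun t => (pow_pos (hpos t) 2).ne')
  -- apply the improper integral criterion with b i = i
  refine integrableOn_Ioi_of_intervalIntegral_norm_bounded 1 0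
    (f := fun t => (τ' t / τ t) ^ 2) (b := fun n : ℕ => (n : ℝ)) (l := Filter.atTop)
    (fun n => hcont.integrableOn_Ioc) tendsto_natCast_atTop_atTop ?_
  filter_upwards with n
  have hn : (0:ℝ) ≤ (n:ℝ) := Nat.cast_nonneg n
  have hle : ∀ t ∈ Icc (0:ℝ) (n:ℝ), ‖(τ' t / τ t) ^ 2‖ ≤ τ' t / τ t ^ 2 := by
    intro t ht
    rw [Real.norm_eq_abs, abs_of_nonneg (by positivity)]
    rw [div_pow]
    gcongr
    nlinarith [hτ'nonneg t ht.1, hτ'le t]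
  calc ∫ x in (0:ℝ)..(n:ℝ), ‖(τ' x / τ x) ^ 2‖
      ≤ ∫ x in (0:ℝ)..(n:ℝ), τ' x / τ x ^ 2 := by
        apply intervalIntegral.integral_mono_on hn
          (hcont.norm.intervalIntegrable _ _) (hcontg.intervalIntegrable _ _) hle
    _ = g n - g 0 := intervalIntegral.integral_eq_sub_of_hasDerivAt
        (fun t _ => hgd t) (hcontg.intervalIntegrable _ _)
    _ ≤ 1 := by
        have h1 : (0:ℝ) < (τ n)⁻¹ := inv_pos.2 (hpos _)
        simp only [hg, hτ0, inv_one]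
        linarith
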